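/- (Sign alternation) Let V ∈ ℝ^{(r+1)×r} with all D_j = det(V with row j deleted) nonzero, a ∈ ℝ^{r+1} with Vu = a inconsistent, and let z* be the best equidistant point. Then with residual w = a − Vz*, the quantities w_1 D_1, w_2 D_2, …, w_{r+1} D_{r+1} have alternating signs: specifically w_j D_j = C·(−1)^j |D_j| for a constant C independent of j. -/
import Mathlib


/-- Sign alternation: with `w = a − Vz*` for the best equidistant point `z*`,
the quantities `w_j D_j` alternate in sign: `w_j D_j = C (−1)^j |D_j|`
(1-based `j` in the paper; 0-based here). -/
theorem stmt_15 (r : ℕ) (V : Matrix (Fin (r + 1)) (Fin r) ℝ) (a : Fin (r + 1) → ℝ)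
    (ha : a ∉ Set.range V.mulVec)
    (D : Fin (r + 1) → ℝ) (hD : ∀ j, D j = (V.submatrix (Fin.succAbove j) id).det)
    (hDne : ∀ j, D j ≠ 0)
    (uhat : Fin (r + 1) → Fin r → ℝ)
    (huhat : ∀ j, (V.submatrix (Fin.succAbove j) id).mulVec (uhat j) =
      fun k => a (Fin.succAbove j k))
    (zstar : Fin r → ℝ)
    (hz : zstar = (∑ j, |D j|)⁻¹ • ∑ j, |D j| • uhat j)
    (w : Fin (r + 1) → ℝ) (hw : w = a - V.mulVec zstar) :
    ∃ C : ℝ, ∀ j, w j * D j = C * (-1) ^ ((j : ℕ) + 1) * |D j| := by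
  classical
  set S : ℝ := ∑ j, |D j| with hS
  set aug : (Fin (r + 1) → ℝ) → Matrix (Fin (r + 1)) (Fin (r + 1)) ℝ :=
    fun x => Matrix.of fun i => Fin.snoc (V i) (x i) with haug
  -- aug as updateColumn of aug a
  have haug_upd : ∀ x : Fin (r + 1) → ℝ, aug x = (aug a).updateCol (Fin.last r) x := by
    intro x
    ext i k
    induction k using Fin.lastCases with
    | last => simp [haug, Matrix.updateCol_apply]
    | cast k' => simp [haug, Matrix.updateCol_apply, (Fin.castSucc_lt_last k').ne]
  have det_add : ∀ x y : Fin (r + 1) → ℝ,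
      (aug (x + y)).det = (aug x).det + (aug y).det := by
    intro x y
    rw [haug_upd x, haug_upd y, haug_upd (x + y)]
    exact Matrix.det_updateCol_add _ _ _ _
  -- column linear combination vanishes
  have det_mulVec_zero : ∀ u : Fin r → ℝ, (aug (V.mulVec u)).det = 0 := by
    intro u
    rw [haug_upd]
    have hrep : V.mulVec u
        = fun k => ∑ i, (Fin.snoc u 0 : Fin (r + 1) → ℝ) i • (aug a) k i := by
      funext k
      rw [Fin.sum_univ_castSucc]
      simp [haug, Matrix.mulVec, dotProduct, mul_comm]
    rw [hrep, Matrix.det_updateCol_sum]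
    simp
  -- determinant of aug of a scaled basis vector
  have det_e : ∀ (j : Fin (r + 1)) (t : ℝ),
      (aug (fun i => if i = j then t else 0)).det = (-1) ^ ((j : ℕ) + r) * t * D j := by
    intro j t
    rw [Matrix.det_succ_column (aug (fun i => if i = j then t else 0)) (Fin.last r)]
    rw [Finset.sum_eq_single j]
    · have h1 : aug (fun i => if i = j then t else 0) j (Fin.last r) = t := by
        simp [haug]
      have h2 : ((aug (fun i => if i = j then t else 0)).submatrix j.succAbove
          (Fin.last r).succAbove).det = D j := by
        rw [hD j]
        congr 1
        ext i' k'
        simp [haug, Fin.succAbove_last, Matrix.submatrix_apply]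
      rw [h1, h2]
      simp [Fin.val_last]
    · intro b _ hb
      have : aug (fun i => if i = j then t else 0) b (Fin.last r) = 0 := by
        simp [haug, hb]
      rw [this]; ring
    · intro h; exact absurd (Finset.mem_univ j) h
  set t : Fin (r + 1) → ℝ := fun j => a j - V.mulVec (uhat j) j with ht
  -- the key determinant identity
  have hdetB : ∀ j : Fin (r + 1),
      (aug a).det = (-1) ^ ((j : ℕ) + r) * t j * D j := by
    intro j
    have hsplit : a = (fun i => if i = j then t j else 0) + V.mulVec (uhat j) := by
      funext i
      by_cases hi : i = j
      · subst hi; simp [ht]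
      · obtain ⟨k, hk⟩ := Fin.exists_succAbove_eq hi
        have h2 := congrFun (huhat j) k
        simp only [Matrix.mulVec, dotProduct, Matrix.submatrix_apply, id] at h2
        simp only [Pi.add_apply, if_neg hi, zero_add]
        rw [← hk, Matrix.mulVec, dotProduct]
        exact h2.symm
    rw [hsplit, det_add, det_mulVec_zero, add_zero, det_e]
  have hSpos : 0 < S := by
    rw [hS]
    exact Finset.sum_pos (fun j _ => abs_pos.mpr (hDne j)) Finset.univ_nonempty
  -- compute w j
  have hVz : ∀ j : Fin (r + 1),
      V.mulVec zstar j = S⁻¹ * ∑ k, |D k| * V.mulVec (uhat k) j := by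
    intro j
    rw [hz]
    simp only [Matrix.mulVec, dotProduct, Pi.smul_apply, Finset.sum_apply,
      smul_eq_mul, Finset.mul_sum]
    rw [Finset.sum_comm]
    exact Finset.sum_congr rfl fun k _ => Finset.sum_congr rfl fun l _ => by ring
  have hoff : ∀ j k : Fin (r + 1), k ≠ j → V.mulVec (uhat k) j = a j := by
    intro j k hkj
    obtain ⟨i, hi⟩ := Fin.exists_succAbove_eq (Ne.symm hkj)
    have := congrFun (huhat k) i
    simp only [Matrix.mulVec, dotProduct, Matrix.submatrix_apply, id] at this
    rw [← hi, Matrix.mulVec, dotProduct]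
    exact this
  have hwj : ∀ j : Fin (r + 1), w j = S⁻¹ * (|D j| * t j) := by
    intro j
    have ha_expand : a j = S⁻¹ * ∑ k, |D k| * a j := by
      rw [← Finset.sum_mul, ← hS, eq_comm, inv_mul_eq_iff_eq_mul₀ hSpos.ne', mul_comm]
    rw [hw]
    simp only [Pi.sub_apply]
    rw [hVz j, ha_expand, ← mul_sub, ← Finset.sum_sub_distrib]
    congr 1
    rw [Finset.sum_eq_single j]
    · rw [ht, mul_sub]
    · intro k _ hkj
      rw [hoff j k hkj]; ring
    · intro h; exact absurd (Finset.mem_univ j) h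
  refine ⟨S⁻¹ * (-1) ^ (r + 1) * (aug a).det, fun j => ?_⟩
  rw [hwj j, hdetB j]
  have hsign : ((-1 : ℝ)) ^ (r + 1) * (-1) ^ ((j : ℕ) + r) * (-1) ^ ((j : ℕ) + 1) = 1 := by
    rw [← pow_add, ← pow_add]
    exact Even.neg_one_pow ⟨(j : ℕ) + r + 1, by ring⟩
  linear_combination (-(S⁻¹ * t j * D j * |D j|)) * hsign
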